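/- arXiv:1802.07548 — 2 statements merged into one kernel-verified Lean document; each statement's English description precedes it below -/
import Mathlib

section
/- Let U ⊆ ℝⁿ be open and bounded, Y a Banach space, and m, k ∈ ℕ. The map A : C^k(closure U, L^m_s(ℝ^d, Y)) → L^m_s(C^k(closure U, ℝ^d), C^k(closure U, Y)) defined by (A(H)(h₁,…,h_m))(x) := H(x)(h₁(x),…,h_m(x)) is a well-defined continuous linear map between Banach spaces. -/
set_option maxSynthPendingDepth 3
set_option maxHeartbeats 1000000
set_option synthInstance.maxHeartbeats 400000

noncomputable section

/-- Membership in `C^k(closure U, Y)`: `f` is `k` times continuously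
differentiable on `U` and each iterated derivative of order `i ≤ k` extends
continuously to `closure U`. -/
def IsCkBar {E Y : Type*} [NormedAddCommGroup E] [NormedSpace ℝ E]
    [NormedAddCommGroup Y] [NormedSpace ℝ Y] (k : ℕ) (U : Set E) (f : E → Y) : Prop :=
  ContDiffOn ℝ k f U ∧
  ∀ i ≤ k, ∃ g : C(closure U, ContinuousMultilinearMap ℝ (fun _ : Fin i => E) Y),
    ∀ x : closure U, (x : E) ∈ U → g x = iteratedFDerivWithin ℝ i f U x

/-- The `C^k` norm `‖f‖ = max_{i ≤ k} sup_{x ∈ U} ‖D^i f(x)‖` (which by density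
equals the corresponding sup over `closure U` of the continuous extensions). -/
def ckNorm {E Y : Type*} [NormedAddCommGroup E] [NormedSpace ℝ E]
    [NormedAddCommGroup Y] [NormedSpace ℝ Y] (k : ℕ) (U : Set E) (f : E → Y) : ℝ :=
  ⨆ i : Fin (k + 1), ⨆ x : U, ‖iteratedFDerivWithin ℝ (i : ℕ) f U x‖

namespace Stmt8Aux

open Set Topology ContinuousLinearMap

variable {n : ℕ} {U : Set (EuclideanSpace ℝ (Fin n))}

local notation "E" => EuclideanSpace ℝ (Fin n)

lemma ckNorm_nonneg {Z : Type*} [NormedAddCommGroup Z] [NormedSpace ℝ Z]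
    (k : ℕ) (f : E → Z) : 0 ≤ ckNorm k U f :=
  Real.iSup_nonneg fun _ => Real.iSup_nonneg fun _ => norm_nonneg _

/-- Existence of a continuous extension of the `i`-th derivative to the closure. -/
def Ext (U : Set (EuclideanSpace ℝ (Fin n))) (i : ℕ) {Z : Type*} [NormedAddCommGroup Z]
    [NormedSpace ℝ Z] (f : E → Z) : Prop :=
  ∃ g : C(closure U, ContinuousMultilinearMap ℝ (fun _ : Fin i => E) Z),
    ∀ x : closure U, (x : E) ∈ U → g x = iteratedFDerivWithin ℝ i f U x

lemma isCkBar_iff {Z : Type*} [NormedAddCommGroup Z] [NormedSpace ℝ Z] {k : ℕ} {f : E → Z} :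
    IsCkBar k U f ↔ ContDiffOn ℝ k f U ∧ ∀ i ≤ k, Ext U i f := Iff.rfl

lemma norm_le_ckNorm {Z : Type*} [NormedAddCommGroup Z] [NormedSpace ℝ Z]
    (hUb : Bornology.IsBounded U) {k : ℕ} {f : E → Z}
    (hf : IsCkBar k U f) {i : ℕ} (hi : i ≤ k) {x : E} (hx : x ∈ U) :
    ‖iteratedFDerivWithin ℝ i f U x‖ ≤ ckNorm k U f := by
  obtain ⟨g, hg⟩ := hf.2 i hi
  have hc : IsCompact (closure U) :=
    Metric.isCompact_of_isClosed_isBounded isClosed_closure hUb.closure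
  haveI : CompactSpace (closure U) := isCompact_iff_compactSpace.mp hc
  have hbdd : BddAbove (Set.range fun y : U => ‖iteratedFDerivWithin ℝ i f U y‖) := by
    have h1 : IsCompact (Set.range fun y : closure U => ‖g y‖) :=
      isCompact_range g.continuous.norm
    refine h1.bddAbove.mono ?_
    rintro - ⟨y, rfl⟩
    exact ⟨⟨y, subset_closure y.2⟩, by simp [hg ⟨(y : E), subset_closure y.2⟩ y.2]⟩
  have h2 : ‖iteratedFDerivWithin ℝ i f U x‖ ≤ ⨆ y : U, ‖iteratedFDerivWithin ℝ i f U y‖ :=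
    le_ciSup hbdd ⟨x, hx⟩
  refine h2.trans ?_
  have hb2 : BddAbove (Set.range fun j : Fin (k + 1) =>
      ⨆ y : U, ‖iteratedFDerivWithin ℝ (j : ℕ) f U y‖) :=
    (Set.finite_range _).bddAbove
  exact le_ciSup hb2 (⟨i, Nat.lt_succ_of_le hi⟩ : Fin (k + 1))

lemma ext_congr {Z : Type*} [NormedAddCommGroup Z] [NormedSpace ℝ Z] {i : ℕ}
    {f₁ f₂ : E → Z} (h : Set.EqOn f₁ f₂ U) (hf : Ext U i f₁) : Ext U i f₂ := by
  obtain ⟨g, hg⟩ := hf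
  exact ⟨g, fun x hx => (hg x hx).trans (iteratedFDerivWithin_congr h hx i)⟩

lemma isCkBar_congr {Z : Type*} [NormedAddCommGroup Z] [NormedSpace ℝ Z] {k : ℕ}
    {f₁ f₂ : E → Z} (h : Set.EqOn f₁ f₂ U) (hf : IsCkBar k U f₁) : IsCkBar k U f₂ :=
  ⟨hf.1.congr fun x hx => (h hx).symm, fun i hi => ext_congr h (hf.2 i hi)⟩

lemma isCkBar_of_succ {Z : Type*} [NormedAddCommGroup Z] [NormedSpace ℝ Z] {k : ℕ}
    {f : E → Z} (hf : IsCkBar (k + 1) U f) : IsCkBar k U f :=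
  ⟨hf.1.of_le (by exact_mod_cast Nat.le_succ k), fun i hi => hf.2 i (hi.trans (Nat.le_succ k))⟩

lemma isCkBar_fderivWithin (hUo : IsOpen U) {Z : Type*} [NormedAddCommGroup Z]
    [NormedSpace ℝ Z] {k : ℕ} {f : E → Z} (hf : IsCkBar (k + 1) U f) :
    IsCkBar k U (fderivWithin ℝ f U) := by
  constructor
  · exact hf.1.fderivWithin hUo.uniqueDiffOn (by exact_mod_cast le_rfl)
  · intro i hi
    obtain ⟨g, hg⟩ := hf.2 (i + 1) (Nat.succ_le_succ hi)
    refine ⟨⟨fun y => (continuousMultilinearCurryRightEquiv' ℝ i E Z) (g y),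
      (continuousMultilinearCurryRightEquiv' ℝ i E Z).continuous.comp g.continuous⟩, ?_⟩
    intro x hx
    have h1 := iteratedFDerivWithin_succ_eq_comp_right (𝕜 := ℝ) (f := f) (n := i)
      hUo.uniqueDiffOn hx
    simp only [ContinuousMap.coe_mk]
    rw [hg x hx, h1]
    simp [Function.comp]

lemma isCkBar_add {Z : Type*} [NormedAddCommGroup Z] [NormedSpace ℝ Z] {k : ℕ}
    (hUo : IsOpen U) {f g : E → Z} (hf : IsCkBar k U f) (hg : IsCkBar k U g) :
    IsCkBar k U (fun x => f x + g x) := by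
  refine ⟨hf.1.add hg.1, fun i hi => ?_⟩
  obtain ⟨gf, hgf⟩ := hf.2 i hi
  obtain ⟨gg, hgg⟩ := hg.2 i hi
  refine ⟨⟨fun y => gf y + gg y, gf.continuous.add gg.continuous⟩, ?_⟩
  intro x hx
  have hik : (i : WithTop ℕ∞) ≤ k := by exact_mod_cast hi
  simp only [ContinuousMap.coe_mk]
  rw [hgf x hx, hgg x hx,
    iteratedFDerivWithin_add_apply' (hf.1.of_le hik x hx) (hg.1.of_le hik x hx) hUo.uniqueDiffOn hx]

lemma ext_zero_bilinear {F G Z : Type*} [NormedAddCommGroup F] [NormedSpace ℝ F]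
    [NormedAddCommGroup G] [NormedSpace ℝ G] [NormedAddCommGroup Z] [NormedSpace ℝ Z]
    (B : F →L[ℝ] G →L[ℝ] Z) {f : E → F} {g : E → G}
    (hf : Ext U 0 f) (hg : Ext U 0 g) : Ext U 0 (fun x => B (f x) (g x)) := by
  obtain ⟨gf, hgf⟩ := hf
  obtain ⟨gg, hgg⟩ := hg
  refine ⟨⟨fun y => (continuousMultilinearCurryFin0 ℝ E Z).symm
      (B (continuousMultilinearCurryFin0 ℝ E F (gf y))
        (continuousMultilinearCurryFin0 ℝ E G (gg y))), ?_⟩, ?_⟩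
  · have h1 : Continuous fun y : closure U =>
        ((continuousMultilinearCurryFin0 ℝ E F (gf y)),
          (continuousMultilinearCurryFin0 ℝ E G (gg y))) :=
      ((continuousMultilinearCurryFin0 ℝ E F).continuous.comp gf.continuous).prodMk
        ((continuousMultilinearCurryFin0 ℝ E G).continuous.comp gg.continuous)
    exact (continuousMultilinearCurryFin0 ℝ E Z).symm.continuous.comp
      (B.isBoundedBilinearMap.continuous.comp h1)
  · intro x hx
    simp only [ContinuousMap.coe_mk]
    rw [hgf x hx, hgg x hx]
    rw [iteratedFDerivWithin_zero_eq_comp, iteratedFDerivWithin_zero_eq_comp,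
      iteratedFDerivWithin_zero_eq_comp]
    simp [Function.comp]

lemma isCkBar_bilinear (hUo : IsOpen U) :
    ∀ (k : ℕ) {F : Type uF} {G : Type uG} {Z : Type uZ}
      [NormedAddCommGroup F] [NormedSpace ℝ F] [NormedAddCommGroup G] [NormedSpace ℝ G]
      [NormedAddCommGroup Z] [NormedSpace ℝ Z]
      (B : F →L[ℝ] G →L[ℝ] Z) (f : E → F) (g : E → G),
      IsCkBar k U f → IsCkBar k U g → IsCkBar k U (fun x => B (f x) (g x)) := by
  intro k
  induction k with
  | zero =>
    intro F G Z _ _ _ _ _ _ B f g hf hg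
    have hbb : IsBoundedBilinearMap ℝ (fun p : F × G => B p.1 p.2) := B.isBoundedBilinearMap
    have hcd : ContDiffOn ℝ ((0 : ℕ) : WithTop ℕ∞) (fun x => B (f x) (g x)) U :=
      hbb.contDiff.comp_contDiffOn (hf.1.prodMk hg.1)
    refine ⟨hcd, ?_⟩
    intro i hi
    interval_cases i
    exact ext_zero_bilinear B (hf.2 0 le_rfl) (hg.2 0 le_rfl)
  | succ k IH =>
    intro F G Z _ _ _ _ _ _ B f g hf hg
    have hUD : UniqueDiffOn ℝ U := hUo.uniqueDiffOn
    have h1 : IsCkBar k U (fun x => B.precompR E (f x) (fderivWithin ℝ g U x)) :=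
      IH (B.precompR E) f (fderivWithin ℝ g U) (isCkBar_of_succ hf) (isCkBar_fderivWithin hUo hg)
    have h2 : IsCkBar k U (fun x => B.precompL E (fderivWithin ℝ f U x) (g x)) :=
      IH (B.precompL E) (fderivWithin ℝ f U) g (isCkBar_fderivWithin hUo hf) (isCkBar_of_succ hg)
    have hΦ : IsCkBar k U (fun x => B.precompR E (f x) (fderivWithin ℝ g U x)
        + B.precompL E (fderivWithin ℝ f U x) (g x)) := isCkBar_add hUo h1 h2
    have hone : (1 : WithTop ℕ∞) ≤ ((k + 1 : ℕ) : WithTop ℕ∞) := by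
      exact_mod_cast Nat.succ_le_succ (Nat.zero_le k)
    have heq : Set.EqOn (fun x => B.precompR E (f x) (fderivWithin ℝ g U x)
        + B.precompL E (fderivWithin ℝ f U x) (g x))
        (fderivWithin ℝ (fun x => B (f x) (g x)) U) U := by
      intro x hx
      exact (B.fderivWithin_of_bilinear ((hf.1.differentiableOn (by exact_mod_cast Nat.succ_ne_zero k)) x hx)
        ((hg.1.differentiableOn (by exact_mod_cast Nat.succ_ne_zero k)) x hx) (hUD x hx)).symm
    have hD : IsCkBar k U (fderivWithin ℝ (fun x => B (f x) (g x)) U) :=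
      isCkBar_congr heq hΦ
    have hbb : IsBoundedBilinearMap ℝ (fun p : F × G => B p.1 p.2) := B.isBoundedBilinearMap
    have hcd : ContDiffOn ℝ ((k + 1 : ℕ) : WithTop ℕ∞) (fun x => B (f x) (g x)) U :=
      hbb.contDiff.comp_contDiffOn (hf.1.prodMk hg.1)
    refine ⟨hcd, ?_⟩
    intro i hi
    match i, hi with
    | 0, _ => exact ext_zero_bilinear B (hf.2 0 (Nat.zero_le _)) (hg.2 0 (Nat.zero_le _))
    | (j + 1), hi =>
      have hj : j ≤ k := Nat.succ_le_succ_iff.mp hi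
      obtain ⟨gΦ, hgΦ⟩ := hD.2 j hj
      refine ⟨⟨fun y => (continuousMultilinearCurryRightEquiv' ℝ j E Z).symm (gΦ y),
        (continuousMultilinearCurryRightEquiv' ℝ j E Z).symm.continuous.comp gΦ.continuous⟩, ?_⟩
      intro x hx
      simp only [ContinuousMap.coe_mk]
      rw [hgΦ x hx, iteratedFDerivWithin_succ_eq_comp_right hUD hx]
      simp [Function.comp]

lemma ckNorm_bilinear (hUb : Bornology.IsBounded U) (hUo : IsOpen U)
    {F G Z : Type*} [NormedAddCommGroup F] [NormedSpace ℝ F]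
    [NormedAddCommGroup G] [NormedSpace ℝ G] [NormedAddCommGroup Z] [NormedSpace ℝ Z]
    (B : F →L[ℝ] G →L[ℝ] Z) {k : ℕ} {f : E → F} {g : E → G}
    (hf : IsCkBar k U f) (hg : IsCkBar k U g) :
    ckNorm k U (fun x => B (f x) (g x)) ≤
      ‖B‖ * 2 ^ k * (ckNorm k U f * ckNorm k U g) := by
  have hf0 := ckNorm_nonneg (U := U) k f
  have hg0 := ckNorm_nonneg (U := U) k g
  have h0 : (0 : ℝ) ≤ ‖B‖ * 2 ^ k * (ckNorm k U f * ckNorm k U g) := by positivity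
  refine ciSup_le fun i => Real.iSup_le (fun x => ?_) h0
  have hik : (i : ℕ) ≤ k := Nat.lt_succ_iff.mp i.2
  have hikc : ((i : ℕ) : WithTop ℕ∞) ≤ (k : WithTop ℕ∞) := by exact_mod_cast hik
  calc ‖iteratedFDerivWithin ℝ (i : ℕ) (fun x => B (f x) (g x)) U x‖
      ≤ ‖B‖ * ∑ j ∈ Finset.range ((i : ℕ) + 1), ((i : ℕ).choose j : ℝ) *
          ‖iteratedFDerivWithin ℝ j f U x‖ * ‖iteratedFDerivWithin ℝ ((i : ℕ) - j) g U x‖ :=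
        B.norm_iteratedFDerivWithin_le_of_bilinear hf.1 hg.1 hUo.uniqueDiffOn x.2 hikc
    _ ≤ ‖B‖ * ∑ j ∈ Finset.range ((i : ℕ) + 1), ((i : ℕ).choose j : ℝ) *
          ckNorm k U f * ckNorm k U g := by
        refine mul_le_mul_of_nonneg_left (Finset.sum_le_sum fun j hj => ?_) (norm_nonneg B)
        have hjk : j ≤ k := (Nat.le_of_lt_succ (Finset.mem_range.mp hj)).trans hik
        have hb1 := norm_le_ckNorm hUb hf hjk x.2
        have hb2 := norm_le_ckNorm hUb hg ((Nat.sub_le (i : ℕ) j).trans hik) x.2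
        have c0 : (0 : ℝ) ≤ ((i : ℕ).choose j : ℝ) := Nat.cast_nonneg _
        exact mul_le_mul (mul_le_mul_of_nonneg_left hb1 c0) hb2 (norm_nonneg _)
          (mul_nonneg c0 hf0)
    _ = ‖B‖ * (2 ^ (i : ℕ) * (ckNorm k U f * ckNorm k U g)) := by
        rw [← Finset.sum_mul, ← Finset.sum_mul, ← Nat.cast_sum, Nat.sum_range_choose]
        push_cast
        ring
    _ ≤ ‖B‖ * (2 ^ k * (ckNorm k U f * ckNorm k U g)) := by
        refine mul_le_mul_of_nonneg_left (mul_le_mul_of_nonneg_right ?_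
          (mul_nonneg hf0 hg0)) (norm_nonneg B)
        exact pow_le_pow_right₀ one_le_two hik
    _ = ‖B‖ * 2 ^ k * (ckNorm k U f * ckNorm k U g) := by ring

lemma isCkBar_clm (hUo : IsOpen U) (hUb : Bornology.IsBounded U)
    {F Z : Type*} [NormedAddCommGroup F] [NormedSpace ℝ F]
    [NormedAddCommGroup Z] [NormedSpace ℝ Z] (T : F →L[ℝ] Z) {k : ℕ} {f : E → F}
    (hf : IsCkBar k U f) :
    IsCkBar k U (fun x => T (f x)) ∧ ckNorm k U (fun x => T (f x)) ≤ ‖T‖ * ckNorm k U f := by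
  have hcomp : ∀ {i : ℕ}, i ≤ k → ∀ x ∈ U, iteratedFDerivWithin ℝ i (fun x => T (f x)) U x
      = T.compContinuousMultilinearMap (iteratedFDerivWithin ℝ i f U x) := by
    intro i hi x hx
    exact T.iteratedFDerivWithin_comp_left (hf.1 x hx) hUo.uniqueDiffOn hx
      (by exact_mod_cast hi : (i : WithTop ℕ∞) ≤ k)
  constructor
  · refine ⟨hf.1.continuousLinearMap_comp T, fun i hi => ?_⟩
    obtain ⟨gf, hgf⟩ := hf.2 i hi
    refine ⟨⟨fun y => (ContinuousLinearMap.compContinuousMultilinearMapL ℝ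
        (fun _ : Fin i => E) F Z T) (gf y),
        ((ContinuousLinearMap.compContinuousMultilinearMapL ℝ
          (fun _ : Fin i => E) F Z T).continuous).comp gf.continuous⟩, ?_⟩
    intro x hx
    simp only [ContinuousMap.coe_mk]
    rw [hgf x hx, hcomp hi x hx]
    rfl
  · have h0 : (0 : ℝ) ≤ ‖T‖ * ckNorm k U f :=
      mul_nonneg (norm_nonneg _) (ckNorm_nonneg _ _)
    refine ciSup_le fun i => Real.iSup_le (fun x => ?_) h0
    have hik : (i : ℕ) ≤ k := Nat.lt_succ_iff.mp i.2
    rw [hcomp hik x x.2]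
    exact (T.norm_compContinuousMultilinearMap_le _).trans
      (mul_le_mul_of_nonneg_left (norm_le_ckNorm hUb hf hik x.2) (norm_nonneg T))

lemma main (hUo : IsOpen U) (hUb : Bornology.IsBounded U) (d k : ℕ)
    {Y : Type*} [NormedAddCommGroup Y] [NormedSpace ℝ Y] :
    ∀ (m : ℕ)
      (H : E → ContinuousMultilinearMap ℝ (fun _ : Fin m => EuclideanSpace ℝ (Fin d)) Y),
      IsCkBar k U H →
      ∀ h : Fin m → (E → EuclideanSpace ℝ (Fin d)), (∀ i, IsCkBar k U (h i)) →
      IsCkBar k U (fun x => H x (fun i => h i x)) ∧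
        ckNorm k U (fun x => H x (fun i => h i x)) ≤
          ((2 : ℝ) ^ k) ^ m * ckNorm k U H * ∏ i : Fin m, ckNorm k U (h i) := by
  intro m
  induction m with
  | zero =>
    intro H hH h hh
    set T := (continuousMultilinearCurryFin0 ℝ (EuclideanSpace ℝ (Fin d))
      Y).toLinearIsometry.toContinuousLinearMap with hT
    have heq : (fun x => H x (fun i => h i x)) = fun x => T (H x) := by
      funext x
      show H x _ = H x 0
      congr 1
      exact funext fun i => i.elim0
    rw [heq]
    obtain ⟨ha, hb⟩ := isCkBar_clm hUo hUb T hH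
    refine ⟨ha, hb.trans ?_⟩
    simp only [pow_zero, Finset.univ_eq_empty, Finset.prod_empty, one_mul, mul_one]
    exact mul_le_mul_of_nonneg_right (LinearIsometry.norm_toContinuousLinearMap_le _)
      (ckNorm_nonneg _ _) |>.trans (by simp)
  | succ m IH =>
    intro H hH h hh
    set Bc := (continuousMultilinearCurryLeftEquiv ℝ
      (fun _ : Fin (m + 1) => EuclideanSpace ℝ (Fin d)) Y).toLinearIsometry.toContinuousLinearMap
      with hBc
    have hH' : IsCkBar k U (fun x => Bc (H x) (h 0 x)) :=
      isCkBar_bilinear hUo k Bc H (h 0) hH (hh 0)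
    have hH'n : ckNorm k U (fun x => Bc (H x) (h 0 x)) ≤
        ‖Bc‖ * 2 ^ k * (ckNorm k U H * ckNorm k U (h 0)) :=
      ckNorm_bilinear hUb hUo Bc hH (hh 0)
    have heq : (fun x => H x (fun i => h i x))
        = (fun x => (fun x => Bc (H x) (h 0 x)) x (fun i : Fin m => h i.succ x)) := by
      funext x
      show H x _ = (H x).curryLeft (h 0 x) (fun i : Fin m => h i.succ x)
      rw [ContinuousMultilinearMap.curryLeft_apply]
      congr 1
      exact (Fin.cons_self_tail fun i => h i x).symm
    obtain ⟨ih1, ih2⟩ := IH (fun x => Bc (H x) (h 0 x)) hH'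
      (fun i => h i.succ) (fun i => hh i.succ)
    rw [heq]
    refine ⟨ih1, ih2.trans ?_⟩
    have hBc1 : ‖Bc‖ ≤ 1 := LinearIsometry.norm_toContinuousLinearMap_le _
    have hH0 := ckNorm_nonneg (U := U) k H
    have hh0 := ckNorm_nonneg (U := U) k (h 0)
    have h1 : ckNorm k U (fun x => Bc (H x) (h 0 x)) ≤
        2 ^ k * (ckNorm k U H * ckNorm k U (h 0)) := by
      refine hH'n.trans ?_
      have : ‖Bc‖ * 2 ^ k ≤ 1 * 2 ^ k :=
        mul_le_mul_of_nonneg_right hBc1 (by positivity)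
      nlinarith [mul_nonneg hH0 hh0]
    have hP : (0 : ℝ) ≤ ∏ i : Fin m, ckNorm k U (h i.succ) :=
      Finset.prod_nonneg fun i _ => ckNorm_nonneg _ _
    rw [Fin.prod_univ_succ]
    calc ((2 : ℝ) ^ k) ^ m * ckNorm k U (fun x => Bc (H x) (h 0 x)) *
          ∏ i : Fin m, ckNorm k U (h i.succ)
        ≤ ((2 : ℝ) ^ k) ^ m * (2 ^ k * (ckNorm k U H * ckNorm k U (h 0))) *
          ∏ i : Fin m, ckNorm k U (h i.succ) := by
          exact mul_le_mul_of_nonneg_right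
            (mul_le_mul_of_nonneg_left h1 (by positivity)) hP
      _ = ((2 : ℝ) ^ k) ^ (m + 1) * ckNorm k U H *
          (ckNorm k U (h 0) * ∏ i : Fin m, ckNorm k U (h i.succ)) := by ring

end Stmt8Aux

/-- the evaluation map
`A : C^k(closure U, L^m_s(ℝ^d, Y)) → L^m_s(C^k(closure U, ℝ^d), C^k(closure U, Y))`,
`(A(H)(h₁,…,h_m))(x) = H(x)(h₁(x),…,h_m(x))`, is well defined (maps `C^k` data
to `C^k` data), is linear in `H`, and is continuous, i.e. bounded:
`‖A(H)(h₁,…,h_m)‖_{C^k} ≤ C ‖H‖_{C^k} ∏ ‖h_i‖_{C^k}`. -/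
theorem stmt_8 (n d m k : ℕ) (Y : Type*) [NormedAddCommGroup Y] [NormedSpace ℝ Y]
    [CompleteSpace Y]
    (U : Set (EuclideanSpace ℝ (Fin n))) (hUo : IsOpen U) (hUb : Bornology.IsBounded U) :
    (∀ (H₁ H₂ : EuclideanSpace ℝ (Fin n) →
        ContinuousMultilinearMap ℝ (fun _ : Fin m => EuclideanSpace ℝ (Fin d)) Y)
      (h : Fin m → (EuclideanSpace ℝ (Fin n) → EuclideanSpace ℝ (Fin d))),
      (fun x => (H₁ x + H₂ x) (fun i => h i x)) =
        (fun x => H₁ x (fun i => h i x)) + fun x => H₂ x (fun i => h i x)) ∧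
    ∃ C > (0 : ℝ),
      ∀ H : EuclideanSpace ℝ (Fin n) →
          ContinuousMultilinearMap ℝ (fun _ : Fin m => EuclideanSpace ℝ (Fin d)) Y,
        IsCkBar k U H →
        (∀ (x : EuclideanSpace ℝ (Fin n)) (v : Fin m → EuclideanSpace ℝ (Fin d))
          (σ : Equiv.Perm (Fin m)), H x (v ∘ σ) = H x v) →
        ∀ h : Fin m → (EuclideanSpace ℝ (Fin n) → EuclideanSpace ℝ (Fin d)),
          (∀ i, IsCkBar k U (h i)) →
          IsCkBar k U (fun x => H x (fun i => h i x)) ∧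
          ckNorm k U (fun x => H x (fun i => h i x)) ≤
            C * ckNorm k U H * ∏ i : Fin m, ckNorm k U (h i) := by
  constructor
  · intro H₁ H₂ h
    funext x
    simp [ContinuousMultilinearMap.add_apply]
  · refine ⟨((2 : ℝ) ^ k) ^ m, by positivity, ?_⟩
    intro H hH _ h hh
    exact Stmt8Aux.main hUo hUb d k m H hH h hh
end
end

section
/- Let Y be a Banach space, U ⊆ ℝⁿ and V ⊆ ℝᵐ open and bounded, and g ∈ C^k(closure V, closure U) with g(closure V) ⊆ U (precomposition data). Then the precomposition map α̃_g : C^k(closure U, Y) → C^k(closure V, Y), f ↦ f ∘ g, is a continuous linear map between Banach spaces; in particular it is smooth. -/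
noncomputable section

section Aux
variable {E Y : Type*} [NormedAddCommGroup E] [NormedSpace ℝ E]
  [NormedAddCommGroup Y] [NormedSpace ℝ Y]

lemma isCkBar_bound {k : ℕ} {U : Set E} (hK : IsCompact (closure U)) {f : E → Y}
    (hf : IsCkBar k U f) :
    ∃ M : ℝ, 0 ≤ M ∧ ∀ i ≤ k, ∀ x ∈ U, ‖iteratedFDerivWithin ℝ i f U x‖ ≤ M := by
  have H : ∀ i : Fin (k + 1), ∃ Mi : ℝ, 0 ≤ Mi ∧
      ∀ x ∈ U, ‖iteratedFDerivWithin ℝ (i : ℕ) f U x‖ ≤ Mi := by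
    intro i
    obtain ⟨G, hG⟩ := hf.2 i (Nat.lt_succ_iff.mp i.2)
    have : CompactSpace (closure U) := isCompact_iff_compactSpace.mp hK
    obtain ⟨C, hC⟩ := isBounded_iff_forall_norm_le.mp (isCompact_range G.continuous).isBounded
    refine ⟨max C 0, le_max_right _ _, fun x hx => ?_⟩
    rw [← hG ⟨x, subset_closure hx⟩ hx]
    exact le_trans (hC _ (Set.mem_range_self _)) (le_max_left _ _)
  choose Mi hMi0 hMi using H
  refine ⟨∑ i, Mi i, Finset.sum_nonneg fun i _ => hMi0 i, fun i hi x hx => ?_⟩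
  calc ‖iteratedFDerivWithin ℝ i f U x‖ ≤ Mi ⟨i, Nat.lt_succ_of_le hi⟩ :=
        hMi ⟨i, Nat.lt_succ_of_le hi⟩ x hx
    _ ≤ ∑ j, Mi j := Finset.single_le_sum (fun j _ => hMi0 j) (Finset.mem_univ _)

lemma ckNorm_nonneg (k : ℕ) (U : Set E) (f : E → Y) : 0 ≤ ckNorm k U f :=
  Real.iSup_nonneg fun _ => Real.iSup_nonneg fun _ => norm_nonneg _

lemma le_ckNorm {k : ℕ} {U : Set E} (hK : IsCompact (closure U)) {f : E → Y}
    (hf : IsCkBar k U f) {j : ℕ} (hj : j ≤ k) {y : E} (hy : y ∈ U) :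
    ‖iteratedFDerivWithin ℝ j f U y‖ ≤ ckNorm k U f := by
  obtain ⟨M, hM0, hM⟩ := isCkBar_bound hK hf
  have h1 : ‖iteratedFDerivWithin ℝ j f U y‖ ≤ ⨆ x : U, ‖iteratedFDerivWithin ℝ j f U x‖ := by
    refine le_ciSup_of_le ⟨M, ?_⟩ (⟨y, hy⟩ : U) le_rfl
    rintro r ⟨x, rfl⟩
    exact hM j hj x x.2
  refine h1.trans ?_
  have hb : BddAbove (Set.range fun i : Fin (k + 1) =>
      ⨆ x : U, ‖iteratedFDerivWithin ℝ (i : ℕ) f U x‖) :=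
    Set.Finite.bddAbove (Set.finite_range _)
  exact le_ciSup_of_le hb (⟨j, Nat.lt_succ_of_le hj⟩ : Fin (k + 1)) le_rfl

end Aux

/-- the precomposition map `α̃_g : C^k(closure U, Y) → C^k(closure V, Y)`,
`f ↦ f ∘ g`, is a well-defined continuous linear map (hence smooth). Linearity is
expressed pointwise and continuity as boundedness for the `C^k` norms. -/
theorem stmt_16 (n m k : ℕ) (Y : Type*) [NormedAddCommGroup Y] [NormedSpace ℝ Y]
    [CompleteSpace Y]
    (U : Set (EuclideanSpace ℝ (Fin n))) (V : Set (EuclideanSpace ℝ (Fin m)))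
    (hUo : IsOpen U) (hUb : Bornology.IsBounded U)
    (hVo : IsOpen V) (hVb : Bornology.IsBounded V)
    (g : EuclideanSpace ℝ (Fin m) → EuclideanSpace ℝ (Fin n))
    (hg : IsCkBar k V g) (hgc : ContinuousOn g (closure V))
    (hgmap : Set.MapsTo g (closure V) U) :
    -- linearity of `f ↦ f ∘ g`
    (∀ f₁ f₂ : EuclideanSpace ℝ (Fin n) → Y,
      (fun x => (f₁ + f₂) (g x)) = (fun x => f₁ (g x)) + fun x => f₂ (g x)) ∧
    (∀ (c : ℝ) (f : EuclideanSpace ℝ (Fin n) → Y),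
      (fun x => (c • f) (g x)) = c • fun x => f (g x)) ∧
    -- well-definedness and boundedness
    ∃ C > (0 : ℝ), ∀ f : EuclideanSpace ℝ (Fin n) → Y, IsCkBar k U f →
      IsCkBar k V (fun x => f (g x)) ∧
      ckNorm k V (fun x => f (g x)) ≤ C * ckNorm k U f := by
  refine ⟨fun f₁ f₂ => rfl, fun c f => rfl, ?_⟩
  have hKU : IsCompact (closure U) := hUb.isCompact_closure
  have hKV : IsCompact (closure V) := hVb.isCompact_closure
  have hUd : UniqueDiffOn ℝ U := hUo.uniqueDiffOn
  have hVd : UniqueDiffOn ℝ V := hVo.uniqueDiffOn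
  have hgVU : Set.MapsTo g V U := fun x hx => hgmap (subset_closure hx)
  obtain ⟨Mg, hMg0, hMg⟩ := isCkBar_bound hKV hg
  set D : ℝ := 1 + Mg with hD
  have hD1 : (1 : ℝ) ≤ D := by simp [hD]; linarith
  have hD0 : (0 : ℝ) < D := by linarith
  refine ⟨(k.factorial : ℝ) * D ^ k, by positivity, fun f hf => ?_⟩
  choose Ff hFf using hf.2
  choose Fg hFg using hg.2
  have hcont : ContDiffOn ℝ k (fun x => f (g x)) V := hf.1.comp hg.1 hgVU
  have hgT := hg.1.ftaylorSeriesWithin hVd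
  have hfT := hf.1.ftaylorSeriesWithin hUd
  have hcomp := hfT.comp hgT hgVU
  have key : ∀ i ≤ k, ∀ x ∈ V, iteratedFDerivWithin ℝ i (fun y => f (g y)) V x =
      ∑ c : OrderedFinpartition i,
        c.compAlongOrderedFinpartition (ftaylorSeriesWithin ℝ f U (g x) c.length)
          (fun m' => ftaylorSeriesWithin ℝ g V x (c.partSize m')) := by
    intro i hi x hx
    exact (hcomp.eq_iteratedFDerivWithin_of_uniqueDiffOn (by exact_mod_cast hi) hVd hx).symm
  have hgsub : ∀ x : closure V, g x ∈ closure U := fun x => subset_closure (hgmap x.2)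
  have hgmem : ∀ x : closure V, g x ∈ U := fun x => hgmap x.2
  let gbar : C(closure V, closure U) :=
    ⟨fun x => ⟨g x, hgsub x⟩, Continuous.subtype_mk hgc.restrict _⟩
  constructor
  · refine ⟨hcont, fun i hi => ?_⟩
    refine ⟨⟨fun x => ∑ c : OrderedFinpartition i,
        c.compAlongOrderedFinpartition (Ff c.length (le_trans c.length_le hi) (gbar x))
          (fun m' => Fg (c.partSize m') (le_trans (c.partSize_le m') hi) x), ?_⟩, ?_⟩
    · refine continuous_finset_sum _ fun c _ => ?_
      have hB : Continuous fun x : closure V =>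
          c.compAlongOrderedFinpartitionL ℝ (EuclideanSpace ℝ (Fin m))
            (EuclideanSpace ℝ (Fin n)) Y (Ff c.length (le_trans c.length_le hi) (gbar x)) :=
        (c.compAlongOrderedFinpartitionL ℝ _ _ Y).continuous.comp
          ((Ff c.length (le_trans c.length_le hi)).continuous.comp gbar.continuous)
      have hp : Continuous fun x : closure V =>
          fun m' => Fg (c.partSize m') (le_trans (c.partSize_le m') hi) x :=
        continuous_pi fun m' => (Fg (c.partSize m') (le_trans (c.partSize_le m') hi)).continuous
      exact continuous_eval.comp (hB.prodMk hp)
    · intro x hx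
      simp only [ContinuousMap.coe_mk]
      rw [key i hi x hx]
      refine Finset.sum_congr rfl fun c _ => ?_
      congr 1
      · exact hFf c.length (le_trans c.length_le hi) (gbar x) (hgmem x)
      · funext m'
        exact hFg (c.partSize m') (le_trans (c.partSize_le m') hi) x hx
  · have hnn : 0 ≤ ckNorm k U f := ckNorm_nonneg k U f
    have main : ∀ i ≤ k, ∀ x ∈ V,
        ‖iteratedFDerivWithin ℝ i (fun y => f (g y)) V x‖ ≤
          (k.factorial : ℝ) * D ^ k * ckNorm k U f := by
      intro i hi x hx
      have h1 : ‖iteratedFDerivWithin ℝ i (f ∘ g) V x‖ ≤ (i.factorial : ℝ) * ckNorm k U f * D ^ i := by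
        refine norm_iteratedFDerivWithin_comp_le (𝕜 := ℝ) (N := (k : WithTop ℕ∞)) hf.1 hg.1
          (by exact_mod_cast hi) hUd hVd hgVU hx
          (fun j hj => le_ckNorm hKU hf (le_trans hj hi) (hgVU hx))
          (fun j hj1 hji => ?_)
        calc ‖iteratedFDerivWithin ℝ j g V x‖ ≤ Mg := hMg j (le_trans hji hi) x hx
          _ ≤ D := by linarith
          _ ≤ D ^ j := le_self_pow₀ hD1 (by omega)
      have h2 : (i.factorial : ℝ) * ckNorm k U f * D ^ i ≤ (k.factorial : ℝ) * D ^ k * ckNorm k U f := by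
        rw [mul_right_comm]
        have h3 : (i.factorial : ℝ) * D ^ i ≤ (k.factorial : ℝ) * D ^ k := by
          apply mul_le_mul
          · exact_mod_cast Nat.factorial_le hi
          · exact pow_le_pow_right₀ hD1 hi
          · positivity
          · positivity
        exact mul_le_mul_of_nonneg_right h3 hnn
      exact le_trans h1 h2
    unfold ckNorm
    refine ciSup_le fun i => ?_
    rcases isEmpty_or_nonempty (↥V) with hV | hV
    · rw [Real.iSup_of_isEmpty]
      exact mul_nonneg (by positivity) hnn
    · exact ciSup_le fun x => main i (Nat.lt_succ_iff.mp i.2) x x.2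
end
end
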